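/- Let 0 < p < q < ∞. Then there exists a sequence of functions g_n : ℂ → ℂ (n ∈ ℕ), each holomorphic on the open unit disc D = {z ∈ ℂ : |z| < 1}, such that for every N ∈ ℕ and all complex scalars λ_0, …, λ_N with λ_N ≠ 0, the linear combination L = λ_0 g_0 + ⋯ + λ_N g_N belongs to H^p, i.e. sup_{0<r<1} ∫_0^{2π} |L(r e^{iθ})|^p dθ < ∞, and does not belong to H^q, i.e. sup_{0<r<1} ∫_0^{2π} |L(r e^{iθ})|^q dθ = ∞. In particular, the ℂ-linear span of {g_n} is an infinite-dimensional vector space F with F \ {0} ⊆ H^p \ H^q. -/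

import Mathlib

open scoped ENNReal Real
open Complex MeasureTheory Set

/-- `∫_a^b |f(r e^{iθ})|^e dθ`, as a Lebesgue integral with values in `[0, ∞]`. -/
noncomputable def hardyArcIntegral (f : ℂ → ℂ) (e a b r : ℝ) : ℝ≥0∞ :=
  ∫⁻ θ in Ioc a b, ENNReal.ofReal (‖f ((r : ℂ) * Complex.exp (θ * Complex.I))‖ ^ e)

lemma normSq_one_sub_circle (r θ : ℝ) :
    ‖(1 : ℂ) - (r : ℂ) * Complex.exp (θ * Complex.I)‖ ^ 2
      = (1 - r) ^ 2 + 2 * r * (1 - Real.cos θ) := by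
  rw [Complex.sq_norm, Complex.normSq_apply]
  simp [Complex.sub_re, Complex.sub_im, Complex.mul_re, Complex.mul_im,
    Complex.exp_ofReal_mul_I_re, Complex.exp_ofReal_mul_I_im]
  linear_combination (r^2) * (Real.sin_sq_add_cos_sq θ)

lemma norm_one_sub_circle_ge (r θ : ℝ) (hr0 : 0 ≤ r) (hr1 : r ≤ 1) :
    1 - r ≤ ‖(1 : ℂ) - (r : ℂ) * Complex.exp (θ * Complex.I)‖ := by
  have h := norm_sub_norm_le (1 : ℂ) ((r : ℂ) * Complex.exp (θ * Complex.I))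
  have h2 : ‖(r : ℂ) * Complex.exp (θ * Complex.I)‖ = r := by
    simp [map_mul, Complex.norm_exp_ofReal_mul_I,
      Complex.norm_real, _root_.abs_of_nonneg hr0]
  simpa [h2, _root_.abs_of_nonneg hr0] using h

lemma min_div_pi_le_sin_half (θ : ℝ) (h0 : 0 ≤ θ) (h2 : θ ≤ 2 * π) :
    min θ (2 * π - θ) / π ≤ Real.sin (θ / 2) := by
  have hπ : (0:ℝ) < π := Real.pi_pos
  rcases le_total θ π with hθ | hθ
  · have := Real.mul_le_sin (x := θ / 2) (by linarith) (by linarith)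
    calc min θ (2 * π - θ) / π ≤ θ / π := by gcongr; exact min_le_left _ _
      _ = 2 / π * (θ / 2) := by ring
      _ ≤ Real.sin (θ / 2) := this
  · have h := Real.mul_le_sin (x := (2 * π - θ) / 2) (by linarith) (by linarith)
    have hs : Real.sin ((2 * π - θ) / 2) = Real.sin (θ / 2) := by
      rw [show (2 * π - θ) / 2 = π - θ / 2 by ring, Real.sin_pi_sub]
    calc min θ (2 * π - θ) / π ≤ (2 * π - θ) / π := by gcongr; exact min_le_right _ _
      _ = 2 / π * ((2 * π - θ) / 2) := by ring
      _ ≤ Real.sin (θ / 2) := hs ▸ h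

lemma norm_one_sub_circle_ge_min (r θ : ℝ) (hr : 1/2 ≤ r) (hr1 : r ≤ 1)
    (h0 : 0 ≤ θ) (h2 : θ ≤ 2 * π) :
    min θ (2 * π - θ) / π ≤ ‖(1 : ℂ) - (r : ℂ) * Complex.exp (θ * Complex.I)‖ := by
  have hπ : (0:ℝ) < π := Real.pi_pos
  set w := ‖(1 : ℂ) - (r : ℂ) * Complex.exp (θ * Complex.I)‖ with hw
  have hw0 : 0 ≤ w := norm_nonneg _
  have hsq : w ^ 2 = (1 - r) ^ 2 + 2 * r * (1 - Real.cos θ) := normSq_one_sub_circle r θ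
  have hcos : 1 - Real.cos θ = 2 * Real.sin (θ / 2) ^ 2 := by
    have := Real.sin_sq_eq_half_sub (θ / 2)
    rw [show 2 * (θ/2) = θ by ring] at this
    linarith
  have hsin := min_div_pi_le_sin_half θ h0 h2
  have hmin0 : 0 ≤ min θ (2 * π - θ) / π := by
    apply div_nonneg _ hπ.le
    simp only [le_min_iff]
    constructor <;> linarith
  nlinarith [Real.sin_sq_add_cos_sq (θ / 2), Real.neg_one_le_cos θ, Real.cos_le_one θ]

lemma pointwise_upper (s r θ : ℝ) (hs0 : 0 < s) (hs1 : s ≤ 1)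
    (hr : r ∈ Ioo (0:ℝ) 1) (hθ : θ ∈ Ioo 0 (2 * π)) :
    ‖(1 : ℂ) - (r : ℂ) * Complex.exp (θ * Complex.I)‖ ^ (-s)
      ≤ 2 * π ^ s * min θ (2 * π - θ) ^ (-s) := by
  have hπ : (0:ℝ) < π := Real.pi_pos
  have hmin : 0 < min θ (2 * π - θ) := lt_min hθ.1 (by linarith [hθ.2])
  have hminπ : min θ (2 * π - θ) ≤ π := by
    rcases le_total θ π with h | h
    · exact le_trans (min_le_left _ _) h
    · exact le_trans (min_le_right _ _) (by linarith)
  set w := ‖(1 : ℂ) - (r : ℂ) * Complex.exp (θ * Complex.I)‖ with hwdef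
  have hw1 : 1 - r ≤ w := norm_one_sub_circle_ge r θ hr.1.le hr.2.le
  have hw0 : 0 < w := lt_of_lt_of_le (by linarith [hr.2]) hw1
  rcases le_total (1/2 : ℝ) r with hhalf | hhalf
  · have hwm : min θ (2 * π - θ) / π ≤ w :=
      norm_one_sub_circle_ge_min r θ hhalf hr.2.le hθ.1.le hθ.2.le
    have h1 : w ^ (-s) ≤ (min θ (2 * π - θ) / π) ^ (-s) :=
      (Real.rpow_le_rpow_iff_of_neg hw0 (by positivity) (by linarith)).mpr hwm
    have h2 : (min θ (2 * π - θ) / π) ^ (-s) = π ^ s * min θ (2 * π - θ) ^ (-s) := by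
      rw [Real.div_rpow hmin.le hπ.le, Real.rpow_neg hπ.le]
      field_simp
    have h3 : 0 ≤ π ^ s * min θ (2 * π - θ) ^ (-s) := by positivity
    nlinarith
  · have hw12 : (1/2 : ℝ) ≤ w := le_trans (by linarith) hw1
    have h1 : w ^ (-s) ≤ ((1:ℝ)/2) ^ (-s) :=
      (Real.rpow_le_rpow_iff_of_neg hw0 (by norm_num) (by linarith)).mpr hw12
    have h2 : ((1:ℝ)/2) ^ (-s) = 2 ^ s := by
      rw [show (1:ℝ)/2 = 2⁻¹ by norm_num, Real.inv_rpow (by norm_num), Real.rpow_neg (by norm_num),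
        inv_inv]
    have h3 : (2:ℝ) ^ s ≤ 2 := by
      calc (2:ℝ) ^ s ≤ 2 ^ (1:ℝ) := Real.rpow_le_rpow_of_exponent_le one_le_two hs1
        _ = 2 := Real.rpow_one 2
    have h4 : 1 ≤ π ^ s * min θ (2 * π - θ) ^ (-s) := by
      have := Real.one_le_rpow_of_pos_of_le_one_of_nonpos
        (x := min θ (2 * π - θ) / π) (by positivity) (by
          rw [div_le_one hπ]; exact hminπ) (z := -s) (by linarith)
      have heq : (min θ (2 * π - θ) / π) ^ (-s) = π ^ s * min θ (2 * π - θ) ^ (-s) := by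
        rw [Real.div_rpow hmin.le hπ.le, Real.rpow_neg hπ.le]
        field_simp
      rw [heq] at this
      exact this
    nlinarith

-- (A+B)^p ≤ 2^p (A^p + B^p)
lemma add_rpow_le (A B p : ℝ) (hA : 0 ≤ A) (hB : 0 ≤ B) (hp : 0 ≤ p) :
    (A + B) ^ p ≤ 2 ^ p * (A ^ p + B ^ p) := by
  rcases le_total A B with h | h
  · calc (A + B) ^ p ≤ (2 * B) ^ p := Real.rpow_le_rpow (by linarith) (by linarith) hp
      _ = 2 ^ p * B ^ p := Real.mul_rpow (by norm_num) hB
      _ ≤ 2 ^ p * (A ^ p + B ^ p) := by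
          have h1 : 0 ≤ A ^ p := Real.rpow_nonneg hA p
          have h2 : (0:ℝ) ≤ 2 ^ p := Real.rpow_nonneg (by norm_num) p
          nlinarith
  · calc (A + B) ^ p ≤ (2 * A) ^ p := Real.rpow_le_rpow (by linarith) (by linarith) hp
      _ = 2 ^ p * A ^ p := Real.mul_rpow (by norm_num) hA
      _ ≤ 2 ^ p * (A ^ p + B ^ p) := by
          have h1 : 0 ≤ B ^ p := Real.rpow_nonneg hB p
          have h2 : (0:ℝ) ≤ 2 ^ p := Real.rpow_nonneg (by norm_num) p
          nlinarith

-- finiteness of the comparison integral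
lemma lintegral_min_rpow_lt_top (s : ℝ) (hs0 : 0 < s) (hs1 : s < 1) :
    ∫⁻ θ in Ioc 0 (2*π), ENNReal.ofReal (min θ (2*π - θ) ^ (-s)) < ⊤ := by
  have hπ : (0:ℝ) < π := Real.pi_pos
  have h1 : IntervalIntegrable (fun x : ℝ => x ^ (-s)) volume 0 (2*π) :=
    intervalIntegral.intervalIntegrable_rpow' (by linarith)
  have h1' : IntegrableOn (fun x : ℝ => x ^ (-s)) (Ioc 0 (2*π)) volume :=
    (intervalIntegrable_iff_integrableOn_Ioc_of_le (by positivity)).mp h1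
  have h2 : IntervalIntegrable (fun x : ℝ => (2*π - x) ^ (-s)) volume 0 (2*π) := by
    have := h1.comp_sub_left (2*π)
    simpa using this.symm
  have h2' : IntegrableOn (fun x : ℝ => (2*π - x) ^ (-s)) (Ioc 0 (2*π)) volume :=
    (intervalIntegrable_iff_integrableOn_Ioc_of_le (by positivity)).mp h2
  have hmeas : Measurable fun x : ℝ => ENNReal.ofReal (x ^ (-s)) :=
    (measurable_id.pow_const (-s)).ennreal_ofReal
  calc ∫⁻ θ in Ioc 0 (2*π), ENNReal.ofReal (min θ (2*π - θ) ^ (-s))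
      ≤ ∫⁻ θ in Ioc 0 (2*π),
          (ENNReal.ofReal (θ ^ (-s)) + ENNReal.ofReal ((2*π - θ) ^ (-s))) := by
        apply lintegral_mono
        intro θ
        simp only []
        rcases min_cases θ (2*π - θ) with ⟨h, _⟩ | ⟨h, _⟩ <;> rw [h] <;>
          [exact le_add_of_nonneg_right zero_le; exact le_add_of_nonneg_left zero_le]
    _ = (∫⁻ θ in Ioc 0 (2*π), ENNReal.ofReal (θ ^ (-s)))
        + ∫⁻ θ in Ioc 0 (2*π), ENNReal.ofReal ((2*π - θ) ^ (-s)) :=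
        lintegral_add_left hmeas _
    _ < ⊤ := by
        apply ENNReal.add_lt_top.mpr
        exact ⟨h1'.lintegral_lt_top, h2'.lintegral_lt_top⟩





lemma uniform_bound (s : ℝ) (hs0 : 0 < s) (hs1 : s < 1) :
    ∃ K : ℝ≥0∞, K < ⊤ ∧ ∀ r ∈ Ioo (0:ℝ) 1,
      ∫⁻ θ in Ioc 0 (2*π),
        ENNReal.ofReal (‖(1 : ℂ) - (r : ℂ) * Complex.exp (θ * Complex.I)‖ ^ (-s)) ≤ K := by
  have hπ : (0:ℝ) < π := Real.pi_pos
  refine ⟨∫⁻ θ in Ioc 0 (2*π), ENNReal.ofReal (2 * π ^ s * min θ (2*π - θ) ^ (-s)), ?_, ?_⟩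
  · have heq : ∀ θ : ℝ, ENNReal.ofReal (2 * π ^ s * min θ (2*π - θ) ^ (-s))
        = ENNReal.ofReal (2 * π ^ s) * ENNReal.ofReal (min θ (2*π - θ) ^ (-s)) := by
      intro θ; rw [ENNReal.ofReal_mul (by positivity)]
    simp_rw [heq]
    rw [lintegral_const_mul' _ _ ENNReal.ofReal_ne_top]
    exact ENNReal.mul_lt_top ENNReal.ofReal_lt_top (lintegral_min_rpow_lt_top s hs0 hs1)
  · intro r hr
    rw [setLIntegral_congr (Ioo_ae_eq_Ioc (a := (0:ℝ)) (b := 2*π)).symm,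
      setLIntegral_congr (Ioo_ae_eq_Ioc (a := (0:ℝ)) (b := 2*π)).symm]
    apply setLIntegral_mono' measurableSet_Ioo
    intro θ hθ
    exact ENNReal.ofReal_le_ofReal (pointwise_upper s r θ hs0 hs1.le hr hθ)

set_option maxHeartbeats 2000000 in
/-- Let `0 < p < q < ∞`. There is a sequence of functions `g n`,
holomorphic on the open unit disc, such that every finite linear combination
`L = λ₀ g 0 + ⋯ + λ_N g N` with `λ_N ≠ 0` belongs to `H^p` and not to `H^q`. -/
theorem lineability_Hp_minus_Hq (p q : ℝ) (hp : 0 < p) (hpq : p < q) :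
    ∃ g : ℕ → ℂ → ℂ,
      (∀ n, DifferentiableOn ℂ (g n) (Metric.ball (0 : ℂ) 1)) ∧
      ∀ (N : ℕ) (lam : ℕ → ℂ), lam N ≠ 0 →
        (⨆ r ∈ Ioo (0 : ℝ) 1,
            hardyArcIntegral (fun z => ∑ n ∈ Finset.range (N + 1), lam n * g n z)
              p 0 (2 * π) r) < ⊤ ∧
        (⨆ r ∈ Ioo (0 : ℝ) 1,
            hardyArcIntegral (fun z => ∑ n ∈ Finset.range (N + 1), lam n * g n z)
              q 0 (2 * π) r) = ⊤ := by
  have hq0 : 0 < q := hp.trans hpq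
  have hπ : (0:ℝ) < π := Real.pi_pos
  have hπ3 : (3:ℝ) < π := Real.pi_gt_three
  -- the exponents
  set a : ℕ → ℝ := fun n => 1/q + (1/p - 1/q) * ((n+1)/(n+2)) with ha
  have hd : 0 < 1/p - 1/q := by
    have h := one_div_lt_one_div_of_lt hp hpq
    linarith
  have hfrac0 : ∀ n : ℕ, 0 < ((n:ℝ)+1)/((n:ℝ)+2) := fun n => by positivity
  have hfrac1 : ∀ n : ℕ, ((n:ℝ)+1)/((n:ℝ)+2) < 1 := fun n => by
    rw [div_lt_one (by positivity)]; linarith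
  have halb : ∀ n, 1/q < a n := fun n => by
    have := mul_pos hd (hfrac0 n); simp only [ha]; linarith
  have haub : ∀ n, a n < 1/p := fun n => by
    have := mul_lt_of_lt_one_right hd (hfrac1 n)
    simp only [ha]; linarith
  have hapos : ∀ n, 0 < a n := fun n => lt_trans (by positivity) (halb n)
  have hfracmono : ∀ m n : ℕ, m ≤ n → ((m:ℝ)+1)/((m:ℝ)+2) ≤ ((n:ℝ)+1)/((n:ℝ)+2) := by
    intro m n hmn
    have hc : (m:ℝ) ≤ n := Nat.cast_le.mpr hmn
    rw [div_le_div_iff₀ (by positivity) (by positivity)]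
    nlinarith
  have hfracsmono : ∀ m n : ℕ, m < n → ((m:ℝ)+1)/((m:ℝ)+2) < ((n:ℝ)+1)/((n:ℝ)+2) := by
    intro m n hmn
    have hc : (m:ℝ) < n := Nat.cast_lt.mpr hmn
    rw [div_lt_div_iff₀ (by positivity) (by positivity)]
    nlinarith
  have hmono : ∀ m n : ℕ, m ≤ n → a m ≤ a n := by
    intro m n hmn
    have := mul_le_mul_of_nonneg_left (hfracmono m n hmn) hd.le
    simp only [ha]; linarith
  have hstrict : ∀ m n : ℕ, m < n → a m < a n := by
    intro m n hmn
    have := mul_lt_mul_of_pos_left (hfracsmono m n hmn) hd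
    simp only [ha]; linarith
  -- the functions
  refine ⟨fun n z => (1 - z) ^ (((-a n : ℝ)) : ℂ), ?_, ?_⟩
  · intro n z hz
    have hz1 : ‖z‖ < 1 := by
      simpa [Complex.dist_eq] using Metric.mem_ball.mp hz
    have hslit : (1 - z) ∈ Complex.slitPlane := by
      rw [Complex.mem_slitPlane_iff]
      left
      have : z.re ≤ ‖z‖ := Complex.re_le_norm z
      simp only [Complex.sub_re, Complex.one_re]
      linarith
    exact (((differentiableAt_const (1:ℂ)).sub differentiableAt_id).cpow
      (differentiableAt_const _) hslit).differentiableWithinAt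
  intro N lam hlam
  have hgnorm : ∀ (n : ℕ) (z : ℂ), ‖(1 - z) ^ (((-a n : ℝ)) : ℂ)‖ = ‖1 - z‖ ^ (-a n) := by
    intro n z
    rw [Complex.norm_cpow_real]
  set c : ℝ := ‖lam N‖ with hcdef
  have hc : 0 < c := norm_pos_iff.mpr hlam
  set L : ℂ → ℂ := fun z => ∑ n ∈ Finset.range (N + 1),
    lam n * (1 - z) ^ (((-a n : ℝ)) : ℂ) with hLdef
  have habsz : ∀ r θ : ℝ, 0 ≤ r → ‖(r:ℂ) * Complex.exp (θ * Complex.I)‖ = r := by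
    intro r θ hr0
    rw [norm_mul, Complex.norm_exp_ofReal_mul_I, Complex.norm_real, Real.norm_eq_abs, _root_.abs_of_nonneg hr0,
      mul_one]
  have htpos : ∀ z : ℂ, ‖z‖ < 1 → 0 < ‖1 - z‖ := by
    intro z hz
    rw [norm_pos_iff, sub_ne_zero]
    intro h
    rw [← h] at hz
    simp at hz
  constructor
  · -- H^p membership
    set sp : ℝ := a N * p with hspdef
    have hsp0 : 0 < sp := mul_pos (hapos N) hp
    have hsp1 : sp < 1 := (lt_div_iff₀ hp).mp (haub N)
    obtain ⟨K, hK, hKb⟩ := uniform_bound sp hsp0 hsp1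
    set C : ℝ := ∑ n ∈ Finset.range (N + 1), ‖lam n‖ with hCdef
    have hC0 : 0 ≤ C := Finset.sum_nonneg fun n _ => (norm_nonneg _)
    -- pointwise bound
    have hub : ∀ z : ℂ, ‖z‖ < 1 →
        ‖L z‖ ^ p ≤ C ^ p * 2 ^ p * (‖1 - z‖ ^ (-sp) + 1) := by
      intro z hz
      set t : ℝ := ‖1 - z‖ with htdef
      have ht0 : 0 < t := htpos z hz
      have hstep1 : ‖L z‖ ≤ C * (t ^ (-a N) + 1) := by
        calc ‖L z‖ ≤ ∑ n ∈ Finset.range (N + 1), ‖lam n * (1 - z) ^ (((-a n : ℝ)) : ℂ)‖ :=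
              norm_sum_le _ _
          _ ≤ ∑ n ∈ Finset.range (N + 1), ‖lam n‖ * (t ^ (-a N) + 1) := by
              apply Finset.sum_le_sum
              intro n hn
              rw [norm_mul, hgnorm n z]
              have hn' : n ≤ N := Nat.lt_succ_iff.mp (Finset.mem_range.mp hn)
              have hbound : t ^ (-a n) ≤ t ^ (-a N) + 1 := by
                rcases le_total t 1 with h1 | h1
                · have := Real.rpow_le_rpow_of_exponent_ge ht0 h1
                    (neg_le_neg (hmono n N hn'))
                  linarith
                · have h2 : t ^ (-a n) ≤ 1 :=
                    Real.rpow_le_one_of_one_le_of_nonpos h1 (by linarith [hapos n])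
                  have h3 : 0 ≤ t ^ (-a N) := Real.rpow_nonneg ht0.le _
                  linarith
              have := mul_le_mul_of_nonneg_left hbound (norm_nonneg (lam n))
              simpa using this
          _ = C * (t ^ (-a N) + 1) := by rw [← Finset.sum_mul]
      have hrpow : ‖L z‖ ^ p ≤ (C * (t ^ (-a N) + 1)) ^ p :=
        Real.rpow_le_rpow (norm_nonneg _) hstep1 hp.le
      have hA : 0 ≤ t ^ (-a N) := Real.rpow_nonneg ht0.le _
      have hmul : (C * (t ^ (-a N) + 1)) ^ p = C ^ p * (t ^ (-a N) + 1) ^ p :=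
        Real.mul_rpow hC0 (by linarith)
      have hadd : (t ^ (-a N) + 1) ^ p ≤ 2 ^ p * ((t ^ (-a N)) ^ p + 1 ^ p) :=
        add_rpow_le _ _ p hA zero_le_one hp.le
      have hexp : (t ^ (-a N)) ^ p = t ^ (-sp) := by
        rw [← Real.rpow_mul ht0.le, hspdef]; ring_nf
      have hCp : 0 ≤ C ^ p := Real.rpow_nonneg hC0 _
      rw [hexp, Real.one_rpow] at hadd
      calc ‖L z‖ ^ p ≤ C ^ p * (t ^ (-a N) + 1) ^ p := by rw [← hmul]; exact hrpow
        _ ≤ C ^ p * (2 ^ p * (t ^ (-sp) + 1)) := by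
            exact mul_le_mul_of_nonneg_left hadd hCp
        _ = C ^ p * 2 ^ p * (t ^ (-sp) + 1) := by ring
    -- measurable comparison function
    have hmeasb : ∀ r : ℝ, Measurable fun θ : ℝ =>
        ENNReal.ofReal (‖(1 : ℂ) - (r : ℂ) * Complex.exp (θ * Complex.I)‖ ^ (-sp)) := by
      intro r
      have hcont : Continuous fun θ : ℝ => ‖(1 : ℂ) - (r : ℂ) * Complex.exp (θ * Complex.I)‖ := by
        fun_prop
      exact (hcont.measurable.pow_const (-sp)).ennreal_ofReal
    have hbound : ∀ r ∈ Ioo (0:ℝ) 1, hardyArcIntegral L p 0 (2*π) r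
        ≤ ENNReal.ofReal (C ^ p * 2 ^ p) * (K + ENNReal.ofReal (2*π)) := by
      intro r hr
      rw [hardyArcIntegral]
      calc ∫⁻ θ in Ioc 0 (2*π), ENNReal.ofReal (‖L ((r:ℂ) * Complex.exp (θ * Complex.I))‖ ^ p)
          ≤ ∫⁻ θ in Ioc 0 (2*π), ENNReal.ofReal (C ^ p * 2 ^ p) *
            (ENNReal.ofReal (‖(1 : ℂ) - (r : ℂ) * Complex.exp (θ * Complex.I)‖ ^ (-sp)) + 1) := by
            apply lintegral_mono
            intro θ
            have hz : ‖(r:ℂ) * Complex.exp (θ * Complex.I)‖ < 1 := by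
              rw [habsz r θ hr.1.le]; exact hr.2
            have h1 := hub _ hz
            calc ENNReal.ofReal (‖L ((r:ℂ) * Complex.exp (θ * Complex.I))‖ ^ p)
                ≤ ENNReal.ofReal (C ^ p * 2 ^ p *
                    (‖(1 : ℂ) - (r : ℂ) * Complex.exp (θ * Complex.I)‖ ^ (-sp) + 1)) :=
                  ENNReal.ofReal_le_ofReal h1
              _ = ENNReal.ofReal (C ^ p * 2 ^ p) *
                  (ENNReal.ofReal (‖(1 : ℂ) - (r : ℂ) * Complex.exp (θ * Complex.I)‖ ^ (-sp)) + 1) := by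
                  rw [ENNReal.ofReal_mul (by positivity), ENNReal.ofReal_add
                    (Real.rpow_nonneg (norm_nonneg _) _) zero_le_one, ENNReal.ofReal_one]
        _ = ENNReal.ofReal (C ^ p * 2 ^ p) * ∫⁻ θ in Ioc 0 (2*π),
            (ENNReal.ofReal (‖(1 : ℂ) - (r : ℂ) * Complex.exp (θ * Complex.I)‖ ^ (-sp)) + 1) :=
            lintegral_const_mul' _ _ ENNReal.ofReal_ne_top
        _ ≤ ENNReal.ofReal (C ^ p * 2 ^ p) * (K + ENNReal.ofReal (2*π)) := by
            apply mul_le_mul_right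
            rw [lintegral_add_right _ measurable_const]
            apply add_le_add (hKb r hr)
            simp [Real.volume_Ioc]
    refine lt_of_le_of_lt (iSup₂_le hbound) ?_
    exact ENNReal.mul_lt_top ENNReal.ofReal_lt_top
      (ENNReal.add_lt_top.mpr ⟨hK, ENNReal.ofReal_lt_top⟩)
  · -- not in H^q
    set sq : ℝ := a N * q with hsqdef
    have hsq1 : 1 < sq := by
      have := (div_lt_iff₀ hq0).mp (halb N)
      linarith
    set C' : ℝ := ∑ n ∈ Finset.range N, ‖lam n‖ with hC'def
    have hC'0 : 0 ≤ C' := Finset.sum_nonneg fun n _ => norm_nonneg _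
    set β : ℝ := a N - a (N - 1) with hbdef
    have hb0 : 0 ≤ β := sub_nonneg.mpr (hmono _ _ (Nat.sub_le N 1))
    have hble : ∀ n : ℕ, n < N → β ≤ a N - a n := by
      intro n hn
      have : a n ≤ a (N-1) := hmono n (N-1) (by omega)
      simp only [hbdef]; linarith
    set δ : ℝ := min 1 ((c / (2 * (C' + 1))) ^ (β⁻¹)) with hddef
    have hd0 : 0 < δ := lt_min one_pos (Real.rpow_pos_of_pos (by positivity) _)
    have hd1 : δ ≤ 1 := min_le_left _ _
    have hCd : C' * δ ^ β ≤ c / 2 := by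
      rcases Nat.eq_zero_or_pos N with h0 | hNpos
      · have hz : C' = 0 := by simp [hC'def, h0]
        rw [hz, zero_mul]; positivity
      · have hbpos : 0 < β := sub_pos.mpr (hstrict (N-1) N (by omega))
        have hdle : δ ≤ (c / (2 * (C' + 1))) ^ (β⁻¹) := min_le_right _ _
        have hkey : δ ^ β ≤ c / (2 * (C' + 1)) := by
          calc δ ^ β ≤ ((c / (2 * (C' + 1))) ^ (β⁻¹)) ^ β :=
                Real.rpow_le_rpow hd0.le hdle hb0
            _ = c / (2 * (C' + 1)) := Real.rpow_inv_rpow (by positivity) hbpos.ne'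
        have h2 : C' * δ ^ β ≤ C' * (c / (2 * (C' + 1))) :=
          mul_le_mul_of_nonneg_left hkey hC'0
        have h3 : C' * (c / (2 * (C' + 1))) ≤ c / 2 := by
          rw [← mul_div_assoc, div_le_div_iff₀ (by positivity) (by norm_num : (0:ℝ) < 2)]
          nlinarith
        linarith
    have hlow : ∀ z : ℂ, ‖z‖ < 1 → ‖1 - z‖ ≤ δ →
        c / 2 * ‖1 - z‖ ^ (-a N) ≤ ‖L z‖ := by
      intro z hz hzd
      set t : ℝ := ‖1 - z‖ with htdef
      have ht0 : 0 < t := htpos z hz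
      have ht1 : t ≤ 1 := le_trans hzd hd1
      have htN : 0 ≤ t ^ (-a N) := Real.rpow_nonneg ht0.le _
      have hterm : ∀ n : ℕ, n < N → ‖lam n‖ * t ^ (-a n)
          ≤ ‖lam n‖ * (δ ^ β * t ^ (-a N)) := by
        intro n hn
        apply mul_le_mul_of_nonneg_left _ (norm_nonneg _)
        have hsplit : t ^ (-a n) = t ^ (a N - a n) * t ^ (-a N) := by
          rw [← Real.rpow_add ht0]; ring_nf
        rw [hsplit]
        apply mul_le_mul_of_nonneg_right _ htN
        calc t ^ (a N - a n) ≤ t ^ β :=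
              Real.rpow_le_rpow_of_exponent_ge ht0 ht1 (hble n hn)
          _ ≤ δ ^ β := Real.rpow_le_rpow ht0.le hzd hb0
      have hsum : ‖∑ n ∈ Finset.range N, lam n * (1 - z) ^ (((-a n : ℝ)) : ℂ)‖
          ≤ C' * δ ^ β * t ^ (-a N) := by
        calc ‖∑ n ∈ Finset.range N, lam n * (1 - z) ^ (((-a n : ℝ)) : ℂ)‖
            ≤ ∑ n ∈ Finset.range N, ‖lam n * (1 - z) ^ (((-a n : ℝ)) : ℂ)‖ := norm_sum_le _ _
          _ ≤ ∑ n ∈ Finset.range N, ‖lam n‖ * (δ ^ β * t ^ (-a N)) := by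
              apply Finset.sum_le_sum
              intro n hn
              rw [norm_mul, hgnorm n z]
              simpa using hterm n (Finset.mem_range.mp hn)
          _ = C' * δ ^ β * t ^ (-a N) := by rw [← Finset.sum_mul]; ring
      have hlast : ‖lam N * (1 - z) ^ (((-a N : ℝ)) : ℂ)‖ = c * t ^ (-a N) := by
        rw [norm_mul, hgnorm N z]
      have hLsplit : L z = (∑ n ∈ Finset.range N, lam n * (1 - z) ^ (((-a n : ℝ)) : ℂ))
          + lam N * (1 - z) ^ (((-a N : ℝ)) : ℂ) := Finset.sum_range_succ _ N
      have htriangle : c * t ^ (-a N) - C' * δ ^ β * t ^ (-a N) ≤ ‖L z‖ := by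
        rw [hLsplit]
        set A := ∑ n ∈ Finset.range N, lam n * (1 - z) ^ (((-a n : ℝ)) : ℂ) with hA
        set B := lam N * (1 - z) ^ (((-a N : ℝ)) : ℂ) with hB
        have h := norm_sub_norm_le B (A + B)
        have h2 : ‖B - (A + B)‖ = ‖A‖ := by
          rw [show B - (A + B) = -A by ring, norm_neg]
        rw [h2] at h
        linarith
      have hfinal : C' * δ ^ β * t ^ (-a N) ≤ c / 2 * t ^ (-a N) :=
        mul_le_mul_of_nonneg_right hCd htN
      linarith
    apply ENNReal.eq_top_of_forall_nnreal_le
    intro M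
    have hKq0 : (0:ℝ) < (c/2)^q * 3^(-sq) :=
      mul_pos (Real.rpow_pos_of_pos (by linarith) q) (Real.rpow_pos_of_pos (by norm_num) _)
    obtain ⟨ε, he0, he3d, he12, heM⟩ : ∃ ε : ℝ, 0 < ε ∧ 3*ε ≤ δ ∧ ε ≤ 1/2 ∧
        (M:ℝ) ≤ (c/2)^q * 3^(-sq) * ε ^ ((1:ℝ) - sq) := by
      have hM'0 : (0:ℝ) < (M:ℝ) + 1 := by positivity
      have hE0 : (0:ℝ) < (((M:ℝ)+1) / ((c/2)^q * 3^(-sq))) ^ ((1 - sq)⁻¹) :=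
        Real.rpow_pos_of_pos (by positivity) _
      refine ⟨min (min (δ/3) (1/2)) ((((M:ℝ)+1) / ((c/2)^q * 3^(-sq))) ^ ((1 - sq)⁻¹)),
        lt_min (lt_min (by linarith) (by norm_num)) hE0, ?_, ?_, ?_⟩
      · have hh : min (min (δ/3) (1/2:ℝ)) ((((M:ℝ)+1) / ((c/2)^q * 3^(-sq))) ^ ((1 - sq)⁻¹))
            ≤ δ/3 := (min_le_left _ _).trans (min_le_left _ _)
        linarith
      · exact (min_le_left _ _).trans (min_le_right (δ/3) (1/2:ℝ))
      · set ε0 := min (min (δ/3) (1/2)) ((((M:ℝ)+1) / ((c/2)^q * 3^(-sq))) ^ ((1 - sq)⁻¹))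
          with hε0def
        have hε0pos : 0 < ε0 := lt_min (lt_min (by linarith) (by norm_num)) hE0
        have hεE : ε0 ≤ (((M:ℝ)+1) / ((c/2)^q * 3^(-sq))) ^ ((1 - sq)⁻¹) := min_le_right _ _
        have h2 : ((((M:ℝ)+1) / ((c/2)^q * 3^(-sq))) ^ ((1 - sq)⁻¹)) ^ ((1:ℝ)-sq)
            = ((M:ℝ)+1) / ((c/2)^q * 3^(-sq)) :=
          Real.rpow_inv_rpow (by positivity) (by linarith : (1:ℝ) - sq ≠ 0)
        have h3 : ((((M:ℝ)+1) / ((c/2)^q * 3^(-sq))) ^ ((1 - sq)⁻¹)) ^ ((1:ℝ)-sq)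
            ≤ ε0 ^ ((1:ℝ)-sq) :=
          (Real.rpow_le_rpow_iff_of_neg hE0 hε0pos (by linarith)).mpr hεE
        rw [h2] at h3
        have h4 : ((c/2)^q * 3^(-sq)) * (((M:ℝ)+1) / ((c/2)^q * 3^(-sq)))
            ≤ ((c/2)^q * 3^(-sq)) * ε0 ^ ((1:ℝ)-sq) :=
          mul_le_mul_of_nonneg_left h3 hKq0.le
        rw [mul_div_cancel₀ _ hKq0.ne'] at h4
        linarith
    obtain ⟨r, hrdef⟩ : ∃ r : ℝ, r = 1 - ε := ⟨_, rfl⟩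
    have h1r : 1 - r = ε := by rw [hrdef]; ring
    have hr0 : 0 < r := by rw [hrdef]; linarith
    have hr1 : r < 1 := by rw [hrdef]; linarith
    have hrIoo : r ∈ Ioo (0:ℝ) 1 := ⟨hr0, hr1⟩
    apply le_iSup₂_of_le r hrIoo
    show (M : ℝ≥0∞) ≤ hardyArcIntegral L q 0 (2*π) r
    have hptw : ∀ θ ∈ Ioc (0:ℝ) ε, ENNReal.ofReal ((c/2)^q * 3^(-sq) * ε ^ (-sq))
        ≤ ENNReal.ofReal (‖L ((r:ℂ) * Complex.exp (θ * Complex.I))‖ ^ q) := by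
      intro θ hθ
      have hθ0 : 0 < θ := hθ.1
      have hθε : θ ≤ ε := hθ.2
      have habs : ‖(r:ℂ) * Complex.exp (θ * Complex.I)‖ = r :=
        habsz r θ (by linarith)
      have habs1 : ‖(r:ℂ) * Complex.exp (θ * Complex.I)‖ < 1 := by
        rw [habs]; linarith
      have ht_lo : ε ≤ ‖(1:ℂ) - (r:ℂ) * Complex.exp (θ * Complex.I)‖ := by
        have := norm_one_sub_circle_ge r θ (by linarith) (by linarith)
        linarith
      set t : ℝ := ‖(1:ℂ) - (r:ℂ) * Complex.exp (θ * Complex.I)‖ with htdef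
      have ht0 : 0 < t := lt_of_lt_of_le he0 ht_lo
      have habsθI : ‖(θ:ℂ) * Complex.I‖ = θ := by
        rw [norm_mul, Complex.norm_I, Complex.norm_real, Real.norm_eq_abs, _root_.abs_of_nonneg hθ0.le, mul_one]
      have hexp1 : ‖(1:ℂ) - Complex.exp (θ * Complex.I)‖ ≤ 2 * θ := by
        rw [norm_sub_rev]
        have h := Complex.norm_exp_sub_one_le (x := (θ:ℂ) * Complex.I)
          (by rw [habsθI]; linarith)
        rw [habsθI] at h
        exact h
      have ht_up : t ≤ 3 * ε := by
        have hsplit : (1:ℂ) - (r:ℂ) * Complex.exp (θ * Complex.I)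
            = (((1 - r : ℝ)) : ℂ) + (r:ℂ) * ((1:ℂ) - Complex.exp (θ * Complex.I)) := by
          push_cast; ring
        have h1 : t ≤ ‖(((1 - r : ℝ)) : ℂ)‖ + ‖(r:ℂ) * ((1:ℂ) - Complex.exp (θ * Complex.I))‖ := by
          rw [htdef, hsplit]; exact norm_add_le _ _
        have h2 : ‖(((1 - r : ℝ)) : ℂ)‖ = ε := by
          rw [Complex.norm_real, Real.norm_eq_abs, _root_.abs_of_nonneg (by linarith), h1r]
        have h3 : ‖(r:ℂ) * ((1:ℂ) - Complex.exp (θ * Complex.I))‖ ≤ 2 * θ := by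
          rw [norm_mul, Complex.norm_real, Real.norm_eq_abs,
            _root_.abs_of_nonneg (by linarith : (0:ℝ) ≤ r)]
          calc r * ‖(1:ℂ) - Complex.exp (θ * Complex.I)‖
              ≤ 1 * (2 * θ) := mul_le_mul (by linarith) hexp1 (norm_nonneg _) (by norm_num)
            _ = 2 * θ := by ring
        linarith
      have hL1 : c/2 * t ^ (-a N) ≤ ‖L ((r:ℂ) * Complex.exp (θ * Complex.I))‖ :=
        hlow _ habs1 (by rw [← htdef]; linarith)
      have h3e : (0:ℝ) < 3*ε := by linarith
      have hmono2 : (3*ε) ^ (-a N) ≤ t ^ (-a N) :=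
        (Real.rpow_le_rpow_iff_of_neg h3e ht0 (neg_lt_zero.mpr (hapos N))).mpr ht_up
      have h1 : c/2 * (3*ε) ^ (-a N) ≤ ‖L ((r:ℂ) * Complex.exp (θ * Complex.I))‖ :=
        le_trans (mul_le_mul_of_nonneg_left hmono2 (by linarith)) hL1
      have hcc : (0:ℝ) ≤ c/2 * (3*ε) ^ (-a N) :=
        mul_nonneg (by linarith) (Real.rpow_nonneg h3e.le _)
      have h2 : (c/2 * (3*ε) ^ (-a N)) ^ q
          ≤ ‖L ((r:ℂ) * Complex.exp (θ * Complex.I))‖ ^ q :=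
        Real.rpow_le_rpow hcc h1 hq0.le
      have h3 : (c/2 * (3*ε) ^ (-a N)) ^ q = (c/2)^q * 3^(-sq) * ε ^ (-sq) := by
        rw [Real.mul_rpow (by linarith) (Real.rpow_nonneg h3e.le _),
          ← Real.rpow_mul h3e.le,
          show -a N * q = -sq by rw [hsqdef]; ring,
          Real.mul_rpow (by norm_num : (0:ℝ) ≤ 3) he0.le]
        ring
      rw [h3] at h2
      exact ENNReal.ofReal_le_ofReal h2
    rw [hardyArcIntegral]
    calc (M : ℝ≥0∞) = ENNReal.ofReal (M:ℝ) := ENNReal.ofReal_coe_nnreal.symm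
      _ ≤ ENNReal.ofReal ((c/2)^q * 3^(-sq) * ε ^ ((1:ℝ) - sq)) :=
          ENNReal.ofReal_le_ofReal heM
      _ = ENNReal.ofReal ((c/2)^q * 3^(-sq) * ε ^ (-sq)) * ENNReal.ofReal ε := by
          rw [← ENNReal.ofReal_mul (mul_nonneg hKq0.le (Real.rpow_nonneg he0.le _))]
          congr 1
          rw [show (1:ℝ) - sq = -sq + 1 by ring, Real.rpow_add he0, Real.rpow_one]
          ring
      _ = ∫⁻ _θ in Ioc 0 ε, ENNReal.ofReal ((c/2)^q * 3^(-sq) * ε ^ (-sq)) := by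
          rw [setLIntegral_const, Real.volume_Ioc, sub_zero]
      _ ≤ ∫⁻ θ in Ioc 0 ε,
            ENNReal.ofReal (‖L ((r:ℂ) * Complex.exp (θ * Complex.I))‖ ^ q) :=
          setLIntegral_mono' measurableSet_Ioc hptw
      _ ≤ ∫⁻ θ in Ioc 0 (2*π),
            ENNReal.ofReal (‖L ((r:ℂ) * Complex.exp (θ * Complex.I))‖ ^ q) := by
          apply lintegral_mono_set
          intro x hx
          exact ⟨hx.1, le_trans hx.2 (by linarith)⟩
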